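/- arXiv:2012.06744 — 5 statements merged into one kernel-verified Lean document; each statement's English description precedes it below -/
import Mathlib

section
/- For q(t) = exp(iθ₁(t))·exp(jθ₂(t))·exp(kθ₃(t)) with differentiable real functions θ₁, θ₂, θ₃, the product q'(t)·q̄(t) equals the pure quaternion (θ₁' + θ₃'·sin(2θ₂))i + (θ₂'·cos(2θ₁) − θ₃'·sin(2θ₁)cos(2θ₂))j + (θ₂'·sin(2θ₁) + θ₃'·cos(2θ₁)cos(2θ₂))k. -/
noncomputable def qi : Quaternion ℝ := ⟨0, 1, 0, 0⟩
noncomputable def qj : Quaternion ℝ := ⟨0, 0, 1, 0⟩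
noncomputable def qk : Quaternion ℝ := ⟨0, 0, 0, 1⟩

/-- `exp(i θ) = cos θ + i sin θ`. -/
noncomputable def expI (θ : ℝ) : Quaternion ℝ := ⟨Real.cos θ, Real.sin θ, 0, 0⟩
/-- `exp(j θ) = cos θ + j sin θ`. -/
noncomputable def expJ (θ : ℝ) : Quaternion ℝ := ⟨Real.cos θ, 0, Real.sin θ, 0⟩
/-- `exp(k θ) = cos θ + k sin θ`. -/
noncomputable def expK (θ : ℝ) : Quaternion ℝ := ⟨Real.cos θ, 0, 0, Real.sin θ⟩

lemma expI_eq (θ : ℝ) : expI θ = Real.cos θ • (1 : Quaternion ℝ) + Real.sin θ • qi := by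
  ext <;> simp [expI, Quaternion.re_one, Quaternion.imI_one, Quaternion.imJ_one, Quaternion.imK_one, Quaternion.re_smul, Quaternion.imI_smul, Quaternion.imJ_smul, Quaternion.imK_smul] <;> simp [qi]
lemma expJ_eq (θ : ℝ) : expJ θ = Real.cos θ • (1 : Quaternion ℝ) + Real.sin θ • qj := by
  ext <;> simp [expJ, Quaternion.re_one, Quaternion.imI_one, Quaternion.imJ_one, Quaternion.imK_one, Quaternion.re_smul, Quaternion.imI_smul, Quaternion.imJ_smul, Quaternion.imK_smul] <;> simp [qj]
lemma expK_eq (θ : ℝ) : expK θ = Real.cos θ • (1 : Quaternion ℝ) + Real.sin θ • qk := by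
  ext <;> simp [expK, Quaternion.re_one, Quaternion.imI_one, Quaternion.imJ_one, Quaternion.imK_one, Quaternion.re_smul, Quaternion.imI_smul, Quaternion.imJ_smul, Quaternion.imK_smul] <;> simp [qk]

lemma hasDerivAt_expI {θ : ℝ → ℝ} {θ' t : ℝ} (h : HasDerivAt θ θ' t) :
    HasDerivAt (fun s => expI (θ s))
      (((-Real.sin (θ t) * θ') • (1 : Quaternion ℝ)) + ((Real.cos (θ t) * θ') • qi)) t := by
  simp only [expI_eq]
  exact ((h.cos.smul_const 1).add (h.sin.smul_const qi))

lemma hasDerivAt_expJ {θ : ℝ → ℝ} {θ' t : ℝ} (h : HasDerivAt θ θ' t) :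
    HasDerivAt (fun s => expJ (θ s))
      (((-Real.sin (θ t) * θ') • (1 : Quaternion ℝ)) + ((Real.cos (θ t) * θ') • qj)) t := by
  simp only [expJ_eq]
  exact ((h.cos.smul_const 1).add (h.sin.smul_const qj))

lemma hasDerivAt_expK {θ : ℝ → ℝ} {θ' t : ℝ} (h : HasDerivAt θ θ' t) :
    HasDerivAt (fun s => expK (θ s))
      (((-Real.sin (θ t) * θ') • (1 : Quaternion ℝ)) + ((Real.cos (θ t) * θ') • qk)) t := by
  simp only [expK_eq]
  exact ((h.cos.smul_const 1).add (h.sin.smul_const qk))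

set_option maxHeartbeats 2000000 in
theorem deriv_mul_conj_phase_formula
    (θ₁ θ₂ θ₃ θ₁' θ₂' θ₃' : ℝ → ℝ)
    (h₁ : ∀ t, HasDerivAt θ₁ (θ₁' t) t)
    (h₂ : ∀ t, HasDerivAt θ₂ (θ₂' t) t)
    (h₃ : ∀ t, HasDerivAt θ₃ (θ₃' t) t)
    (dq : ℝ → Quaternion ℝ)
    (hdq : ∀ t, HasDerivAt (fun s => expI (θ₁ s) * expJ (θ₂ s) * expK (θ₃ s)) (dq t) t) :
    ∀ t, dq t * star (expI (θ₁ t) * expJ (θ₂ t) * expK (θ₃ t)) =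
      (θ₁' t + θ₃' t * Real.sin (2 * θ₂ t)) • qi +
        (θ₂' t * Real.cos (2 * θ₁ t) -
          θ₃' t * Real.sin (2 * θ₁ t) * Real.cos (2 * θ₂ t)) • qj +
        (θ₂' t * Real.sin (2 * θ₁ t) +
          θ₃' t * Real.cos (2 * θ₁ t) * Real.cos (2 * θ₂ t)) • qk := by
  intro t
  have hD := ((hasDerivAt_expI (h₁ t)).mul (hasDerivAt_expJ (h₂ t))).mul (hasDerivAt_expK (h₃ t))
  have hdqt : dq t = _ := (hdq t).unique hD
  rw [hdqt]
  have p1 : Real.sin (θ₁ t) ^ 2 + Real.cos (θ₁ t) ^ 2 = 1 := Real.sin_sq_add_cos_sq _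
  have p2 : Real.sin (θ₂ t) ^ 2 + Real.cos (θ₂ t) ^ 2 = 1 := Real.sin_sq_add_cos_sq _
  have p3 : Real.sin (θ₃ t) ^ 2 + Real.cos (θ₃ t) ^ 2 = 1 := Real.sin_sq_add_cos_sq _
  rw [Real.sin_two_mul, Real.cos_two_mul, Real.sin_two_mul, Real.cos_two_mul]
  ext
  · simp [Quaternion.re_one, Quaternion.imI_one, Quaternion.imJ_one, Quaternion.imK_one, Quaternion.re_smul, Quaternion.imI_smul, Quaternion.imJ_smul, Quaternion.imK_smul, Quaternion.re_mul, Quaternion.imI_mul, Quaternion.imJ_mul, Quaternion.imK_mul] <;> simp [expI, expJ, expK, qi, qj, qk]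
    ring
  · simp [Quaternion.re_one, Quaternion.imI_one, Quaternion.imJ_one, Quaternion.imK_one, Quaternion.re_smul, Quaternion.imI_smul, Quaternion.imJ_smul, Quaternion.imK_smul, Quaternion.re_mul, Quaternion.imI_mul, Quaternion.imJ_mul, Quaternion.imK_mul] <;> simp [expI, expJ, expK, qi, qj, qk]
    linear_combination ((1:ℝ) * (Real.cos (θ₂ t))^2 * (Real.cos (θ₃ t))^2 * (θ₁' t) + (1:ℝ) * (Real.cos (θ₂ t))^2 * (Real.sin (θ₃ t))^2 * (θ₁' t) + (2:ℝ) * (Real.sin (θ₂ t)) * (Real.cos (θ₂ t)) * (Real.cos (θ₃ t))^2 * (θ₃' t) + (2:ℝ) * (Real.sin (θ₂ t)) * (Real.cos (θ₂ t)) * (Real.sin (θ₃ t))^2 * (θ₃' t) + (1:ℝ) * (Real.sin (θ₂ t))^2 * (Real.cos (θ₃ t))^2 * (θ₁' t) + (1:ℝ) * (Real.sin (θ₂ t))^2 * (Real.sin (θ₃ t))^2 * (θ₁' t)) * p1 + ((1:ℝ) * (Real.cos (θ₃ t))^2 * (θ₁' t) + (1:ℝ) * (Real.sin (θ₃ t))^2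 * (θ₁' t)) * p2 + ((1:ℝ) * (θ₁' t) + (2:ℝ) * (Real.sin (θ₂ t)) * (Real.cos (θ₂ t)) * (θ₃' t)) * p3
  · simp [Quaternion.re_one, Quaternion.imI_one, Quaternion.imJ_one, Quaternion.imK_one, Quaternion.re_smul, Quaternion.imI_smul, Quaternion.imJ_smul, Quaternion.imK_smul, Quaternion.re_mul, Quaternion.imI_mul, Quaternion.imJ_mul, Quaternion.imK_mul] <;> simp [expI, expJ, expK, qi, qj, qk]
    linear_combination ((-1:ℝ) * (Real.cos (θ₂ t))^2 * (Real.cos (θ₃ t))^2 * (θ₂' t) + (-1:ℝ) * (Real.cos (θ₂ t))^2 * (Real.sin (θ₃ t))^2 * (θ₂' t) + (-1:ℝ) * (Real.sin (θ₂ t))^2 * (Real.cos (θ₃ t))^2 * (θ₂' t) + (-1:ℝ) * (Real.sin (θ₂ t))^2 * (Real.sin (θ₃ t))^2 * (θ₂' t)) * p1 + ((-1:ℝ) * (Real.cos (θ₃ t))^2 * (θ₂' t) + (-1:ℝ) * (Real.sin (θ₃ t))^2 * (θ₂' t) + (2:ℝ) * (Real.cos (θ₁ t))^2 * (Real.cos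 (θ₃ t))^2 * (θ₂' t) + (2:ℝ) * (Real.cos (θ₁ t))^2 * (Real.sin (θ₃ t))^2 * (θ₂' t) + (2:ℝ) * (Real.sin (θ₁ t)) * (Real.cos (θ₁ t)) * (Real.cos (θ₃ t))^2 * (θ₃' t) + (2:ℝ) * (Real.sin (θ₁ t)) * (Real.cos (θ₁ t)) * (Real.sin (θ₃ t))^2 * (θ₃' t)) * p2 + ((-1:ℝ) * (θ₂' t) + (2:ℝ) * (Real.cos (θ₁ t))^2 * (θ₂' t) + (2:ℝ) * (Real.sin (θ₁ t)) * (Real.cos (θ₁ t)) * (θ₃' t) + (-4:ℝ) * (Real.sin (θ₁ t)) * (Real.cos (θ₁ t)) * (Real.cos (θ₂ t))^2 * (θ₃' t)) * p3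
  · simp [Quaternion.re_one, Quaternion.imI_one, Quaternion.imJ_one, Quaternion.imK_one, Quaternion.re_smul, Quaternion.imI_smul, Quaternion.imJ_smul, Quaternion.imK_smul, Quaternion.re_mul, Quaternion.imI_mul, Quaternion.imJ_mul, Quaternion.imK_mul] <;> simp [expI, expJ, expK, qi, qj, qk]
    linear_combination ((-1:ℝ) * (Real.cos (θ₂ t))^2 * (Real.cos (θ₃ t))^2 * (θ₃' t) + (-1:ℝ) * (Real.cos (θ₂ t))^2 * (Real.sin (θ₃ t))^2 * (θ₃' t) + (1:ℝ) * (Real.sin (θ₂ t))^2 * (Real.cos (θ₃ t))^2 * (θ₃' t) + (1:ℝ) * (Real.sin (θ₂ t))^2 * (Real.sin (θ₃ t))^2 * (θ₃' t)) * p1 + ((1:ℝ) * (Real.cos (θ₃ t))^2 * (θ₃' t) + (1:ℝ) * (Real.sin (θ₃ t))^2 * (θ₃' t) + (-2:ℝ) * (Real.cos (θ₁ t))^2 * (Real.cos (θ₃ t))^2 * (θ₃' t) + (-2:ℝ) * (Real.cos (θ₁ t))^2 * (Real.sin (θ₃ t))^2 * (θ₃' t) + (2:ℝ) * (Real.sin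 (θ₁ t)) * (Real.cos (θ₁ t)) * (Real.cos (θ₃ t))^2 * (θ₂' t) + (2:ℝ) * (Real.sin (θ₁ t)) * (Real.cos (θ₁ t)) * (Real.sin (θ₃ t))^2 * (θ₂' t)) * p2 + ((1:ℝ) * (θ₃' t) + (-2:ℝ) * (Real.cos (θ₂ t))^2 * (θ₃' t) + (-2:ℝ) * (Real.cos (θ₁ t))^2 * (θ₃' t) + (4:ℝ) * (Real.cos (θ₁ t))^2 * (Real.cos (θ₂ t))^2 * (θ₃' t) + (2:ℝ) * (Real.sin (θ₁ t)) * (Real.cos (θ₁ t)) * (θ₂' t)) * p3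
end

section
/- Suppose θ₁, θ₂, θ₃: ℝ → ℝ are differentiable with θ₂(t) ≠ ±π/4, (θ₁(t₀),θ₂(t₀),θ₃(t₀)) = (0,0,0), and satisfy the system θ₁' = a₁ + sin(2θ₁)tan(2θ₂)a₂ − cos(2θ₁)tan(2θ₂)a₃, θ₂' = cos(2θ₁)a₂ + sin(2θ₁)a₃, θ₃' = −(sin(2θ₁)/cos(2θ₂))a₂ + (cos(2θ₁)/cos(2θ₂))a₃. Then q(t) := exp(iθ₁(t))exp(jθ₂(t))exp(kθ₃(t)) satisfies q'(t) = (a₁(t)i + a₂(t)j + a₃(t)k)q(t) with q(t₀) = 1. -/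
noncomputable def eI (c s : ℝ) : Quaternion ℝ := ⟨c, s, 0, 0⟩
noncomputable def eJ (c s : ℝ) : Quaternion ℝ := ⟨c, 0, s, 0⟩
noncomputable def eK (c s : ℝ) : Quaternion ℝ := ⟨c, 0, 0, s⟩

set_option maxHeartbeats 1000000 in
lemma key (a1 a2 a3 s1 c1 s2 c2 s3 c3 : ℝ)
    (p1 : s1^2 + c1^2 = 1) (p2 : s2^2 + c2^2 = 1) (p3 : s3^2 + c3^2 = 1)
    (h2 : c2^2 - s2^2 ≠ 0) :
    (a1 • qi + a2 • qj + a3 • qk) * (eI c1 s1 * eJ c2 s2 * eK c3 s3) =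
    (((-s1 * (a1 + 2*s1*c1 * (2*s2*c2/(c2^2-s2^2)) * a2 - (c1^2-s1^2) * (2*s2*c2/(c2^2-s2^2)) * a3)) • (1:Quaternion ℝ)
        + (c1 * (a1 + 2*s1*c1 * (2*s2*c2/(c2^2-s2^2)) * a2 - (c1^2-s1^2) * (2*s2*c2/(c2^2-s2^2)) * a3)) • qi)
        * eJ c2 s2
      + eI c1 s1 *
        ((-s2 * ((c1^2-s1^2) * a2 + 2*s1*c1 * a3)) • (1:Quaternion ℝ)
          + (c2 * ((c1^2-s1^2) * a2 + 2*s1*c1 * a3)) • qj)) * eK c3 s3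
    + eI c1 s1 * eJ c2 s2 *
        ((-s3 * (-(2*s1*c1/(c2^2-s2^2)) * a2 + (c1^2-s1^2)/(c2^2-s2^2) * a3)) • (1:Quaternion ℝ)
          + (c3 * (-(2*s1*c1/(c2^2-s2^2)) * a2 + (c1^2-s1^2)/(c2^2-s2^2) * a3)) • qk) := by
  have hu : (c2^2 - s2^2) * (c2^2 - s2^2)⁻¹ = 1 := mul_inv_cancel₀ h2
  rw [Quaternion.ext_iff]
  refine ⟨?_, ?_, ?_, ?_⟩ <;> simp only [Quaternion.re_mul,
    Quaternion.imI_mul, Quaternion.imJ_mul, Quaternion.imK_mul, Quaternion.re_add,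
    Quaternion.imI_add, Quaternion.imJ_add, Quaternion.imK_add, Quaternion.re_smul,
    Quaternion.imI_smul, Quaternion.imJ_smul, Quaternion.imK_smul, Quaternion.re_one,
    Quaternion.imI_one, Quaternion.imJ_one, Quaternion.imK_one, smul_eq_mul] <;>
    simp only [qi, qj, qk, eI, eJ, eK, smul_eq_mul]
  case refine_1 =>
    linear_combination ((2:ℝ)*a3*c1*c2*s3 + (-1:ℝ)*a3*c1*c2*s3*(c2^2-s2^2)⁻¹ + (2:ℝ)*a3*c1*s2^2*c2*s3*(c2^2-s2^2)⁻¹ + (-1:ℝ)*a3*s1*s2*c3*(c2^2-s2^2)⁻¹ + (2:ℝ)*a3*s1*s2*c2^2*c3*(c2^2-s2^2)⁻¹ + (-1:ℝ)*a2*c1*s2*c3 + (-2:ℝ)*a2*c1*s2*c3*(c2^2-s2^2)⁻¹ + (4:ℝ)*a2*c1*s2*c2^2*c3*(c2^2-s2^2)⁻¹ + (-1:ℝ)*a2*s1*c2*s3) * p1 + (a3*c1*c2*s3*(c2^2-s2^2)⁻¹ + (-2:ℝ)*a3*c1^3*c2*s3*(c2^2-s2^2)⁻¹ + a3*s1*s2*c3*(c2^2-s2^2)⁻¹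 + (-2:ℝ)*a3*s1*c1^2*s2*c3*(c2^2-s2^2)⁻¹ + (2:ℝ)*a2*c1*s2*c3*(c2^2-s2^2)⁻¹ + (-2:ℝ)*a2*c1^3*s2*c3*(c2^2-s2^2)⁻¹ + (2:ℝ)*a2*s1*c1^2*c2*s3*(c2^2-s2^2)⁻¹) * p2 + (0) * p3 + ((-1:ℝ)*a3*c1*c2*s3 + (2:ℝ)*a3*c1^3*c2*s3 + a3*s1*s2*c3 + (-2:ℝ)*a3*s1*c1^2*s2*c3 + (2:ℝ)*a2*c1*s2*c3 + (-2:ℝ)*a2*c1^3*s2*c3 + (-2:ℝ)*a2*s1*c1^2*c2*s3) * hu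
  case refine_2 =>
    linear_combination ((2:ℝ)*a3*c1*s2*c3 + a3*c1*s2*c3*(c2^2-s2^2)⁻¹ + (-2:ℝ)*a3*c1*s2*c2^2*c3*(c2^2-s2^2)⁻¹ + (-1:ℝ)*a3*s1*c2*s3*(c2^2-s2^2)⁻¹ + (2:ℝ)*a3*s1*s2^2*c2*s3*(c2^2-s2^2)⁻¹ + a2*c1*c2*s3 + (-2:ℝ)*a2*c1*c2*s3*(c2^2-s2^2)⁻¹ + (4:ℝ)*a2*c1*s2^2*c2*s3*(c2^2-s2^2)⁻¹ + (-1:ℝ)*a2*s1*s2*c3) * p1 + ((-1:ℝ)*a3*c1*s2*c3*(c2^2-s2^2)⁻¹ + (2:ℝ)*a3*c1^3*s2*c3*(c2^2-s2^2)⁻¹ + a3*s1*c2*s3*(c2^2-s2^2)⁻¹ + (-2:ℝ)*a3*s1*c1^2*c2*s3*(c2^2-s2^2)⁻¹ + (2:ℝ)*a2*c1*c2*s3*(c2^2-s2^2)⁻¹ + (-2:ℝ)*a2*c1^3*c2*s3*(c2^2-s2^2)⁻¹ + (-2:ℝ)*a2*s1*c1^2*s2*c3*(c2^2-s2^2)⁻¹)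 * p2 + (0) * p3 + ((-1:ℝ)*a3*c1*s2*c3 + (2:ℝ)*a3*c1^3*s2*c3 + (-1:ℝ)*a3*s1*c2*s3 + (2:ℝ)*a3*s1*c1^2*c2*s3 + (-2:ℝ)*a2*c1*c2*s3 + (2:ℝ)*a2*c1^3*c2*s3 + (-2:ℝ)*a2*s1*c1^2*s2*c3) * hu
  case refine_3 =>
    linear_combination ((-2:ℝ)*a3*c1*s2*s3 + (-1:ℝ)*a3*c1*s2*s3*(c2^2-s2^2)⁻¹ + (2:ℝ)*a3*c1*s2*c2^2*s3*(c2^2-s2^2)⁻¹ + (-1:ℝ)*a3*s1*c2*c3*(c2^2-s2^2)⁻¹ + (2:ℝ)*a3*s1*s2^2*c2*c3*(c2^2-s2^2)⁻¹ + a2*c1*c2*c3 + (-2:ℝ)*a2*c1*c2*c3*(c2^2-s2^2)⁻¹ + (4:ℝ)*a2*c1*s2^2*c2*c3*(c2^2-s2^2)⁻¹ + a2*s1*s2*s3) * p1 + (a3*c1*s2*s3*(c2^2-s2^2)⁻¹ + (-2:ℝ)*a3*c1^3*s2*s3*(c2^2-s2^2)⁻¹ + a3*s1*c2*c3*(c2^2-s2^2)⁻¹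 + (-2:ℝ)*a3*s1*c1^2*c2*c3*(c2^2-s2^2)⁻¹ + (2:ℝ)*a2*c1*c2*c3*(c2^2-s2^2)⁻¹ + (-2:ℝ)*a2*c1^3*c2*c3*(c2^2-s2^2)⁻¹ + (2:ℝ)*a2*s1*c1^2*s2*s3*(c2^2-s2^2)⁻¹) * p2 + (0) * p3 + (a3*c1*s2*s3 + (-2:ℝ)*a3*c1^3*s2*s3 + (-1:ℝ)*a3*s1*c2*c3 + (2:ℝ)*a3*s1*c1^2*c2*c3 + (-2:ℝ)*a2*c1*c2*c3 + (2:ℝ)*a2*c1^3*c2*c3 + (2:ℝ)*a2*s1*c1^2*s2*s3) * hu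
  case refine_4 =>
    linear_combination ((-2:ℝ)*a3*c1*c2*c3 + a3*c1*c2*c3*(c2^2-s2^2)⁻¹ + (-2:ℝ)*a3*c1*s2^2*c2*c3*(c2^2-s2^2)⁻¹ + (-1:ℝ)*a3*s1*s2*s3*(c2^2-s2^2)⁻¹ + (2:ℝ)*a3*s1*s2*c2^2*s3*(c2^2-s2^2)⁻¹ + (-1:ℝ)*a2*c1*s2*s3 + (-2:ℝ)*a2*c1*s2*s3*(c2^2-s2^2)⁻¹ + (4:ℝ)*a2*c1*s2*c2^2*s3*(c2^2-s2^2)⁻¹ + a2*s1*c2*c3) * p1 + ((-1:ℝ)*a3*c1*c2*c3*(c2^2-s2^2)⁻¹ + (2:ℝ)*a3*c1^3*c2*c3*(c2^2-s2^2)⁻¹ + a3*s1*s2*s3*(c2^2-s2^2)⁻¹ + (-2:ℝ)*a3*s1*c1^2*s2*s3*(c2^2-s2^2)⁻¹ + (2:ℝ)*a2*c1*s2*s3*(c2^2-s2^2)⁻¹ + (-2:ℝ)*a2*c1^3*s2*s3*(c2^2-s2^2)⁻¹ + (-2:ℝ)*a2*s1*c1^2*c2*c3*(c2^2-s2^2)⁻¹)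 * p2 + (0) * p3 + (a3*c1*c2*c3 + (-2:ℝ)*a3*c1^3*c2*c3 + a3*s1*s2*s3 + (-2:ℝ)*a3*s1*c1^2*s2*s3 + (2:ℝ)*a2*c1*s2*s3 + (-2:ℝ)*a2*c1^3*s2*s3 + (2:ℝ)*a2*s1*c1^2*c2*c3) * hu

lemma expI_eI (θ : ℝ) : expI θ = eI (Real.cos θ) (Real.sin θ) := rfl
lemma expJ_eJ (θ : ℝ) : expJ θ = eJ (Real.cos θ) (Real.sin θ) := rfl
lemma expK_eK (θ : ℝ) : expK θ = eK (Real.cos θ) (Real.sin θ) := rfl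

theorem decisive_system_gives_solution
    (t₀ : ℝ) (a₁ a₂ a₃ θ₁ θ₂ θ₃ : ℝ → ℝ)
    (ha₁ : Continuous a₁) (ha₂ : Continuous a₂) (ha₃ : Continuous a₃)
    (hθ₂ne : ∀ t, θ₂ t ≠ Real.pi / 4 ∧ θ₂ t ≠ -(Real.pi / 4))
    (h₁ : ∀ t, HasDerivAt θ₁
      (a₁ t + Real.sin (2 * θ₁ t) * Real.tan (2 * θ₂ t) * a₂ t -
        Real.cos (2 * θ₁ t) * Real.tan (2 * θ₂ t) * a₃ t) t)
    (h₂ : ∀ t, HasDerivAt θ₂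
      (Real.cos (2 * θ₁ t) * a₂ t + Real.sin (2 * θ₁ t) * a₃ t) t)
    (h₃ : ∀ t, HasDerivAt θ₃
      (-(Real.sin (2 * θ₁ t) / Real.cos (2 * θ₂ t)) * a₂ t +
        Real.cos (2 * θ₁ t) / Real.cos (2 * θ₂ t) * a₃ t) t)
    (hinit : θ₁ t₀ = 0 ∧ θ₂ t₀ = 0 ∧ θ₃ t₀ = 0) :
    (∀ t, HasDerivAt (fun s => expI (θ₁ s) * expJ (θ₂ s) * expK (θ₃ s))
        ((a₁ t • qi + a₂ t • qj + a₃ t • qk) *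
          (expI (θ₁ t) * expJ (θ₂ t) * expK (θ₃ t))) t) ∧
      expI (θ₁ t₀) * expJ (θ₂ t₀) * expK (θ₃ t₀) = 1 := by
  obtain ⟨hi1, hi2, hi3⟩ := hinit
  have hθ₂cont : Continuous θ₂ := by
    rw [continuous_iff_continuousAt]; exact fun t => (h₂ t).continuousAt
  have hrange : ∀ t, θ₂ t ∈ Set.Ioo (-(Real.pi/4)) (Real.pi/4) := by
    intro t
    rcases lt_trichotomy (θ₂ t) (-(Real.pi/4)) with h | h | h
    · exfalso
      have : -(Real.pi/4) ∈ Set.uIcc (θ₂ t₀) (θ₂ t) := by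
        rw [Set.mem_uIcc]
        right
        constructor
        · linarith
        · rw [hi2]; linarith [Real.pi_pos]
      obtain ⟨s, _, hs⟩ := intermediate_value_uIcc (hθ₂cont.continuousOn) this
      exact (hθ₂ne s).2 hs
    · exact absurd h ((hθ₂ne t).2)
    · rcases lt_trichotomy (θ₂ t) (Real.pi/4) with h' | h' | h'
      · exact ⟨h, h'⟩
      · exact absurd h' ((hθ₂ne t).1)
      · exfalso
        have : Real.pi/4 ∈ Set.uIcc (θ₂ t₀) (θ₂ t) := by
          rw [Set.mem_uIcc]
          left
          constructor
          · rw [hi2]; linarith [Real.pi_pos]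
          · linarith
        obtain ⟨s, _, hs⟩ := intermediate_value_uIcc (hθ₂cont.continuousOn) this
        exact (hθ₂ne s).1 hs
  have hc2pos : ∀ t, 0 < Real.cos (2 * θ₂ t) := by
    intro t
    obtain ⟨hl, hr⟩ := hrange t
    exact Real.cos_pos_of_mem_Ioo ⟨by linarith, by linarith⟩
  constructor
  · intro t
    have hc2 : Real.cos (2 * θ₂ t) ≠ 0 := (hc2pos t).ne'
    have DI : HasDerivAt (fun s => expI (θ₁ s))
        ((-Real.sin (θ₁ t) * (a₁ t + Real.sin (2 * θ₁ t) * Real.tan (2 * θ₂ t) * a₂ t -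
        Real.cos (2 * θ₁ t) * Real.tan (2 * θ₂ t) * a₃ t)) • (1 : Quaternion ℝ) +
        (Real.cos (θ₁ t) * (a₁ t + Real.sin (2 * θ₁ t) * Real.tan (2 * θ₂ t) * a₂ t -
        Real.cos (2 * θ₁ t) * Real.tan (2 * θ₂ t) * a₃ t)) • qi) t := by
      simp only [expI_eq]
      exact ((h₁ t).cos.smul_const 1).add ((h₁ t).sin.smul_const qi)
    have DJ : HasDerivAt (fun s => expJ (θ₂ s))
        ((-Real.sin (θ₂ t) * (Real.cos (2 * θ₁ t) * a₂ t + Real.sin (2 * θ₁ t) * a₃ t)) • (1 : Quaternion ℝ) +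
        (Real.cos (θ₂ t) * (Real.cos (2 * θ₁ t) * a₂ t + Real.sin (2 * θ₁ t) * a₃ t)) • qj) t := by
      simp only [expJ_eq]
      exact ((h₂ t).cos.smul_const 1).add ((h₂ t).sin.smul_const qj)
    have DK : HasDerivAt (fun s => expK (θ₃ s))
        ((-Real.sin (θ₃ t) * (-(Real.sin (2 * θ₁ t) / Real.cos (2 * θ₂ t)) * a₂ t +
        Real.cos (2 * θ₁ t) / Real.cos (2 * θ₂ t) * a₃ t)) • (1 : Quaternion ℝ) +
        (Real.cos (θ₃ t) * (-(Real.sin (2 * θ₁ t) / Real.cos (2 * θ₂ t)) * a₂ t +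
        Real.cos (2 * θ₁ t) / Real.cos (2 * θ₂ t) * a₃ t)) • qk) t := by
      simp only [expK_eq]
      exact ((h₃ t).cos.smul_const 1).add ((h₃ t).sin.smul_const qk)
    have DD := (DI.mul DJ).mul DK
    convert DD using 1
    · rfl
    · rfl
    rw [Real.cos_two_mul'] at hc2
    simp only [expI_eI, expJ_eJ, expK_eK, Real.tan_eq_sin_div_cos, Real.sin_two_mul,
      Real.cos_two_mul']
    exact key (a₁ t) (a₂ t) (a₃ t) _ _ _ _ _ _ (Real.sin_sq_add_cos_sq _)
      (Real.sin_sq_add_cos_sq _) (Real.sin_sq_add_cos_sq _) hc2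
  · rw [hi1, hi2, hi3]
    rw [Quaternion.ext_iff]
    simp [Quaternion.re_mul, Quaternion.imI_mul, Quaternion.imJ_mul, Quaternion.imK_mul, Quaternion.re_one, Quaternion.imI_one, Quaternion.imJ_one, Quaternion.imK_one]
    simp [expI, expJ, expK]
end

section
/- Let a₂, a₃ be continuous real functions on an interval containing t₀, set A₂(t) = ∫_{t₀}^t a₂(s) ds, and suppose cos(2A₂(t)) ≠ 0 on the interval and a₁(t) = a₃(t)·tan(2A₂(t)). Then q(t) := exp(j·A₂(t))·exp(k·θ₃(t)), with θ₃(t) = ∫_{t₀}^t a₃(s)/cos(2A₂(s)) ds, satisfies q'(t) = (a₁(t)i + a₂(t)j + a₃(t)k)q(t) and q(t₀) = 1. -/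
lemma prod_form (a b : ℝ) : expJ a * expK b =
    (Real.cos a * Real.cos b) • (1 : Quaternion ℝ) + (Real.sin a * Real.sin b) • qi
      + (Real.sin a * Real.cos b) • qj + (Real.cos a * Real.sin b) • qk := by
  ext <;> simp only [Quaternion.re_mul, Quaternion.imI_mul, Quaternion.imJ_mul, Quaternion.imK_mul, Quaternion.re_add, Quaternion.imI_add, Quaternion.imJ_add, Quaternion.imK_add, Quaternion.re_smul, Quaternion.imI_smul, Quaternion.imJ_smul, Quaternion.imK_smul, Quaternion.re_one, Quaternion.imI_one, Quaternion.imJ_one, Quaternion.imK_one] <;> simp [expJ, expK, qi, qj, qk]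

theorem caseI_exact_solution
    (S : Set ℝ) (hSopen : IsOpen S) (hSconn : S.OrdConnected)
    (t₀ : ℝ) (ht₀ : t₀ ∈ S)
    (a₁ a₂ a₃ : ℝ → ℝ)
    (ha₂ : ContinuousOn a₂ S) (ha₃ : ContinuousOn a₃ S)
    (A₂ θ₃ : ℝ → ℝ)
    (hA₂ : ∀ t, A₂ t = ∫ s in t₀..t, a₂ s)
    (hcos : ∀ t ∈ S, Real.cos (2 * A₂ t) ≠ 0)
    (ha₁ : ∀ t ∈ S, a₁ t = a₃ t * Real.tan (2 * A₂ t))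
    (hθ₃ : ∀ t, θ₃ t = ∫ s in t₀..t, a₃ s / Real.cos (2 * A₂ s)) :
    (∀ t ∈ S, HasDerivAt (fun s => expJ (A₂ s) * expK (θ₃ s))
        ((a₁ t • qi + a₂ t • qj + a₃ t • qk) * (expJ (A₂ t) * expK (θ₃ t))) t) ∧
      expJ (A₂ t₀) * expK (θ₃ t₀) = 1 := by
  have hA₂fun : A₂ = fun t => ∫ s in t₀..t, a₂ s := funext hA₂
  have hA₂deriv : ∀ t ∈ S, HasDerivAt A₂ (a₂ t) t := by
    intro t ht
    rw [hA₂fun]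
    exact intervalIntegral.integral_hasDerivAt_right
      ((ha₂.mono (hSconn.uIcc_subset ht₀ ht)).intervalIntegrable)
      (ha₂.stronglyMeasurableAtFilter hSopen t ht)
      (ha₂.continuousAt (hSopen.mem_nhds ht))
  have hA₂cont : ContinuousOn A₂ S := fun t ht =>
    (hA₂deriv t ht).continuousAt.continuousWithinAt
  have hgcont : ContinuousOn (fun s => a₃ s / Real.cos (2 * A₂ s)) S := by
    apply ha₃.div
    · exact Real.continuous_cos.comp_continuousOn (continuousOn_const.mul hA₂cont)
    · exact hcos
  have hθ₃fun : θ₃ = fun t => ∫ s in t₀..t, a₃ s / Real.cos (2 * A₂ s) := funext hθ₃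
  have hθ₃deriv : ∀ t ∈ S, HasDerivAt θ₃ (a₃ t / Real.cos (2 * A₂ t)) t := by
    intro t ht
    rw [hθ₃fun]
    exact intervalIntegral.integral_hasDerivAt_right
      ((hgcont.mono (hSconn.uIcc_subset ht₀ ht)).intervalIntegrable)
      (hgcont.stronglyMeasurableAtFilter hSopen t ht)
      (hgcont.continuousAt (hSopen.mem_nhds ht))
  constructor
  · intro t ht
    have hda := hA₂deriv t ht
    have hdb := hθ₃deriv t ht
    set a := A₂ t with ha_def
    set b := θ₃ t with hb_def
    set c := Real.cos (2 * a) with hc_def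
    have hc : c ≠ 0 := hcos t ht
    have hca : HasDerivAt (fun s => Real.cos (A₂ s)) (-Real.sin a * a₂ t) t :=
      (Real.hasDerivAt_cos a).comp t hda
    have hsa : HasDerivAt (fun s => Real.sin (A₂ s)) (Real.cos a * a₂ t) t :=
      (Real.hasDerivAt_sin a).comp t hda
    have hcb : HasDerivAt (fun s => Real.cos (θ₃ s)) (-Real.sin b * (a₃ t / c)) t :=
      (Real.hasDerivAt_cos b).comp t hdb
    have hsb : HasDerivAt (fun s => Real.sin (θ₃ s)) (Real.cos b * (a₃ t / c)) t :=
      (Real.hasDerivAt_sin b).comp t hdb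
    have hr := hca.mul hcb
    have hx := hsa.mul hsb
    have hy := hsa.mul hcb
    have hz := hca.mul hsb
    have hf := (((hr.smul_const (1 : Quaternion ℝ)).add (hx.smul_const qi)).add
      (hy.smul_const qj)).add (hz.smul_const qk)
    have hfe : (fun s => expJ (A₂ s) * expK (θ₃ s)) = fun s =>
        (Real.cos (A₂ s) * Real.cos (θ₃ s)) • (1 : Quaternion ℝ)
          + (Real.sin (A₂ s) * Real.sin (θ₃ s)) • qi
          + (Real.sin (A₂ s) * Real.cos (θ₃ s)) • qj
          + (Real.cos (A₂ s) * Real.sin (θ₃ s)) • qk := funext fun s => prod_form _ _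
    rw [hfe, prod_form]
    convert hf using 1
    · rfl
    · rfl
    · rfl
    have hkey1 : c * Real.cos a + Real.sin (2 * a) * Real.sin a = Real.cos a := by
      rw [hc_def, ← Real.cos_sub]; ring_nf
    have hkey2 : Real.sin (2 * a) * Real.cos a - c * Real.sin a = Real.sin a := by
      rw [hc_def, ← Real.sin_sub]; ring_nf
    rw [ha₁ t ht, Real.tan_eq_sin_div_cos]
    ext <;>
      simp only [Quaternion.re_mul, Quaternion.imI_mul, Quaternion.imJ_mul, Quaternion.imK_mul, Quaternion.re_add, Quaternion.imI_add, Quaternion.imJ_add, Quaternion.imK_add, Quaternion.re_smul, Quaternion.imI_smul, Quaternion.imJ_smul, Quaternion.imK_smul, Quaternion.re_one, Quaternion.imI_one, Quaternion.imJ_one, Quaternion.imK_one] <;>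
      simp [qi, qj, qk] <;>
      simp only [← ha_def, ← hb_def, ← hc_def] <;>
      field_simp <;>
      ring_nf <;>
      simp only [show a * 2 = 2 * a from by ring, ← hc_def] <;>
      first
        | linear_combination (a₃ t * Real.sin b) * hkey1
        | linear_combination (-(a₃ t * Real.sin b)) * hkey1
        | linear_combination (a₃ t * Real.cos b) * hkey1
        | linear_combination (-(a₃ t * Real.cos b)) * hkey1
        | linear_combination (a₃ t * Real.sin b) * hkey2
        | linear_combination (-(a₃ t * Real.sin b)) * hkey2
        | linear_combination (a₃ t * Real.cos b) * hkey2
        | linear_combination (-(a₃ t * Real.cos b)) * hkey2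
  · rw [hA₂, hθ₃, intervalIntegral.integral_same, intervalIntegral.integral_same]
    ext <;> simp only [Quaternion.re_mul, Quaternion.imI_mul, Quaternion.imJ_mul, Quaternion.imK_mul, Quaternion.re_one, Quaternion.imI_one, Quaternion.imJ_one, Quaternion.imK_one] <;> simp [expJ, expK]
end

section
/- Let a₁, a₃ be continuous real functions on an interval containing t₀, set A₁(t) = ∫_{t₀}^t a₁(s) ds, and suppose cos(2A₁(t)) ≠ 0 and a₂(t) = −a₃(t)·tan(2A₁(t)). Then q(t) := exp(i·A₁(t))·exp(k·θ₃(t)), with θ₃(t) = ∫_{t₀}^t a₃(s)/cos(2A₁(s)) ds, satisfies q'(t) = (a₁(t)i + a₂(t)j + a₃(t)k)q(t) and q(t₀) = 1. -/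
theorem caseII_exact_solution
    (S : Set ℝ) (hSopen : IsOpen S) (hSconn : S.OrdConnected)
    (t₀ : ℝ) (ht₀ : t₀ ∈ S)
    (a₁ a₂ a₃ : ℝ → ℝ)
    (ha₁ : ContinuousOn a₁ S) (ha₃ : ContinuousOn a₃ S)
    (A₁ θ₃ : ℝ → ℝ)
    (hA₁ : ∀ t, A₁ t = ∫ s in t₀..t, a₁ s)
    (hcos : ∀ t ∈ S, Real.cos (2 * A₁ t) ≠ 0)
    (ha₂ : ∀ t ∈ S, a₂ t = -(a₃ t * Real.tan (2 * A₁ t)))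
    (hθ₃ : ∀ t, θ₃ t = ∫ s in t₀..t, a₃ s / Real.cos (2 * A₁ s)) :
    (∀ t ∈ S, HasDerivAt (fun s => expI (A₁ s) * expK (θ₃ s))
        ((a₁ t • qi + a₂ t • qj + a₃ t • qk) * (expI (A₁ t) * expK (θ₃ t))) t) ∧
      expI (A₁ t₀) * expK (θ₃ t₀) = 1 := by
  have hAfun : A₁ = fun t => ∫ s in t₀..t, a₁ s := funext hA₁
  have hθfun : θ₃ = fun t => ∫ s in t₀..t, a₃ s / Real.cos (2 * A₁ s) := funext hθ₃
  -- derivative of A₁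
  have hA : ∀ t ∈ S, HasDerivAt A₁ (a₁ t) t := by
    intro t ht
    have hsub : Set.uIcc t₀ t ⊆ S := hSconn.uIcc_subset ht₀ ht
    have h := intervalIntegral.integral_hasDerivAt_right
      ((ha₁.mono hsub).intervalIntegrable)
      (ha₁.stronglyMeasurableAtFilter hSopen t ht)
      (ha₁.continuousAt (hSopen.mem_nhds ht))
    rw [hAfun]; exact h
  -- continuity of A₁ on S
  have hA₁cont : ContinuousOn A₁ S := fun t ht =>
    (hA t ht).continuousAt.continuousWithinAt
  set g : ℝ → ℝ := fun s => a₃ s / Real.cos (2 * A₁ s) with hg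
  have hgcont : ContinuousOn g S :=
    ha₃.div (Real.continuous_cos.comp_continuousOn (continuousOn_const.mul hA₁cont)) hcos
  have hθ : ∀ t ∈ S, HasDerivAt θ₃ (g t) t := by
    intro t ht
    have hsub : Set.uIcc t₀ t ⊆ S := hSconn.uIcc_subset ht₀ ht
    have h := intervalIntegral.integral_hasDerivAt_right
      ((hgcont.mono hsub).intervalIntegrable)
      (hgcont.stronglyMeasurableAtFilter hSopen t ht)
      (hgcont.continuousAt (hSopen.mem_nhds ht))
    rw [hθfun]; exact h
  constructor
  · intro t ht
    have hAt := hA t ht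
    have hθt := hθ t ht
    -- expI part
    have e1 : (fun s : ℝ => expI (A₁ s)) =
        fun s => Real.cos (A₁ s) • (1 : Quaternion ℝ) + Real.sin (A₁ s) • qi := by
      funext s
      ext <;> simp [Quaternion.re_one, Quaternion.imI_one, Quaternion.imJ_one, Quaternion.imK_one, Quaternion.re_smul, Quaternion.imI_smul, Quaternion.imJ_smul, Quaternion.imK_smul] <;> simp [expI, qi]
    have e2 : (fun s : ℝ => expK (θ₃ s)) =
        fun s => Real.cos (θ₃ s) • (1 : Quaternion ℝ) + Real.sin (θ₃ s) • qk := by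
      funext s
      ext <;> simp [Quaternion.re_one, Quaternion.imI_one, Quaternion.imJ_one, Quaternion.imK_one, Quaternion.re_smul, Quaternion.imI_smul, Quaternion.imJ_smul, Quaternion.imK_smul] <;> simp [expK, qk]
    have hcosA : HasDerivAt (fun s => Real.cos (A₁ s)) (-Real.sin (A₁ t) * a₁ t) t :=
      (Real.hasDerivAt_cos (A₁ t)).comp t hAt
    have hsinA : HasDerivAt (fun s => Real.sin (A₁ s)) (Real.cos (A₁ t) * a₁ t) t :=
      (Real.hasDerivAt_sin (A₁ t)).comp t hAt
    have hcosT : HasDerivAt (fun s => Real.cos (θ₃ s)) (-Real.sin (θ₃ t) * g t) t :=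
      (Real.hasDerivAt_cos (θ₃ t)).comp t hθt
    have hsinT : HasDerivAt (fun s => Real.sin (θ₃ s)) (Real.cos (θ₃ t) * g t) t :=
      (Real.hasDerivAt_sin (θ₃ t)).comp t hθt
    have hI : HasDerivAt (fun s : ℝ => expI (A₁ s))
        ((-Real.sin (A₁ t) * a₁ t) • (1 : Quaternion ℝ) + (Real.cos (A₁ t) * a₁ t) • qi) t := by
      rw [e1]
      exact (hcosA.smul_const _).add (hsinA.smul_const _)
    have hK : HasDerivAt (fun s : ℝ => expK (θ₃ s))
        ((-Real.sin (θ₃ t) * g t) • (1 : Quaternion ℝ) + (Real.cos (θ₃ t) * g t) • qk) t := by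
      rw [e2]
      exact (hcosT.smul_const _).add (hsinT.smul_const _)
    have hprod : HasDerivAt (fun s => expI (A₁ s) * expK (θ₃ s)) _ t := hI.mul hK
    convert hprod using 1
    have htan : Real.tan (2 * A₁ t) = Real.sin (2 * A₁ t) / Real.cos (2 * A₁ t) :=
      Real.tan_eq_sin_div_cos _
    have hc2 : Real.cos (2 * A₁ t) = Real.cos (A₁ t) ^ 2 - Real.sin (A₁ t) ^ 2 := by
      rw [Real.cos_two_mul']
    have hs2 : Real.sin (2 * A₁ t) = 2 * Real.sin (A₁ t) * Real.cos (A₁ t) := by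
      rw [Real.sin_two_mul]
    have hcne : Real.cos (A₁ t) ^ 2 - Real.sin (A₁ t) ^ 2 ≠ 0 := hc2 ▸ hcos t ht
    have hp : Real.sin (A₁ t) ^ 2 = 1 - Real.cos (A₁ t) ^ 2 := Real.sin_sq _
    have hp3 : Real.sin (A₁ t) ^ 3 = Real.sin (A₁ t) * (1 - Real.cos (A₁ t) ^ 2) := by
      rw [pow_succ, hp]; ring
    ext <;>
      simp only [Quaternion.re_mul,
        Quaternion.imI_mul, Quaternion.imJ_mul, Quaternion.imK_mul, Quaternion.re_add,
        Quaternion.imI_add, Quaternion.imJ_add, Quaternion.imK_add, Quaternion.re_smul,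
        Quaternion.imI_smul, Quaternion.imJ_smul, Quaternion.imK_smul, Quaternion.re_one,
        Quaternion.imI_one, Quaternion.imJ_one, Quaternion.imK_one] <;>
      simp only [ha₂ t ht, htan, hg, expI, expK, qi, qj, qk, smul_eq_mul, hs2, hc2] <;>
      field_simp <;>
      ring_nf <;>
      simp only [hp3, hp] <;>
      ring
  · have h0 : A₁ t₀ = 0 := by rw [hA₁, intervalIntegral.integral_same]
    have h0' : θ₃ t₀ = 0 := by rw [hθ₃, intervalIntegral.integral_same]
    rw [h0, h0']
    ext <;> simp [Quaternion.re_one, Quaternion.imI_one, Quaternion.imJ_one, Quaternion.imK_one, Quaternion.re_mul, Quaternion.imI_mul, Quaternion.imJ_mul, Quaternion.imK_mul] <;> simp [expI, expK]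
end

section
/- Let a₁, a₂ be continuous real functions on an interval containing t₀, set A₁(t) = ∫_{t₀}^t a₁(s) ds, and suppose cos(2A₁(t)) ≠ 0 and a₃(t) = a₂(t)·tan(2A₁(t)). Then q(t) := exp(i·A₁(t))·exp(j·θ₂(t)), with θ₂(t) = ∫_{t₀}^t a₂(s)/cos(2A₁(s)) ds, satisfies q'(t) = (a₁(t)i + a₂(t)j + a₃(t)k)q(t) and q(t₀) = 1. -/
private lemma ftc (S : Set ℝ) (hSopen : IsOpen S) (hSconn : S.OrdConnected)
    (t₀ : ℝ) (ht₀ : t₀ ∈ S) (f : ℝ → ℝ) (hf : ContinuousOn f S)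
    (t : ℝ) (ht : t ∈ S) :
    HasDerivAt (fun u => ∫ s in t₀..u, f s) (f t) t :=
  intervalIntegral.integral_hasDerivAt_right
    ((hf.mono (hSconn.uIcc_subset ht₀ ht)).intervalIntegrable)
    (hf.stronglyMeasurableAtFilter hSopen t ht)
    (hf.continuousAt (hSopen.mem_nhds ht))

theorem caseIII_exact_solution
    (S : Set ℝ) (hSopen : IsOpen S) (hSconn : S.OrdConnected)
    (t₀ : ℝ) (ht₀ : t₀ ∈ S)
    (a₁ a₂ a₃ : ℝ → ℝ)
    (ha₁ : ContinuousOn a₁ S) (ha₂ : ContinuousOn a₂ S)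
    (A₁ θ₂ : ℝ → ℝ)
    (hA₁ : ∀ t, A₁ t = ∫ s in t₀..t, a₁ s)
    (hcos : ∀ t ∈ S, Real.cos (2 * A₁ t) ≠ 0)
    (ha₃ : ∀ t ∈ S, a₃ t = a₂ t * Real.tan (2 * A₁ t))
    (hθ₂ : ∀ t, θ₂ t = ∫ s in t₀..t, a₂ s / Real.cos (2 * A₁ s)) :
    (∀ t ∈ S, HasDerivAt (fun s => expI (A₁ s) * expJ (θ₂ s))
        ((a₁ t • qi + a₂ t • qj + a₃ t • qk) * (expI (A₁ t) * expJ (θ₂ t))) t) ∧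
      expI (A₁ t₀) * expJ (θ₂ t₀) = 1 := by
  have hAd : ∀ t ∈ S, HasDerivAt A₁ (a₁ t) t := by
    intro t ht
    have := ftc S hSopen hSconn t₀ ht₀ a₁ ha₁ t ht
    simpa [← funext hA₁] using this
  have hAcont : ContinuousOn A₁ S := fun t ht => (hAd t ht).continuousAt.continuousWithinAt
  have hgcont : ContinuousOn (fun s => a₂ s / Real.cos (2 * A₁ s)) S :=
    ha₂.div (Real.continuous_cos.comp_continuousOn (continuousOn_const.mul hAcont)) hcos
  have hθd : ∀ t ∈ S, HasDerivAt θ₂ (a₂ t / Real.cos (2 * A₁ t)) t := by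
    intro t ht
    have := ftc S hSopen hSconn t₀ ht₀ _ hgcont t ht
    simpa [← funext hθ₂] using this
  have hq : (fun s => expI (A₁ s) * expJ (θ₂ s)) =
      fun s => (Real.cos (A₁ s) * Real.cos (θ₂ s)) • (1:Quaternion ℝ)
        + (Real.sin (A₁ s) * Real.cos (θ₂ s)) • qi
        + (Real.cos (A₁ s) * Real.sin (θ₂ s)) • qj
        + (Real.sin (A₁ s) * Real.sin (θ₂ s)) • qk := by
    funext s
    ext <;> simp only [Quaternion.re_add, Quaternion.imI_add, Quaternion.imJ_add,
      Quaternion.imK_add, Quaternion.re_smul, Quaternion.imI_smul, Quaternion.imJ_smul,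
      Quaternion.imK_smul, Quaternion.re_one, Quaternion.imI_one, Quaternion.imJ_one,
      Quaternion.imK_one, Quaternion.re_mul, Quaternion.imI_mul,
      Quaternion.imJ_mul, Quaternion.imK_mul] <;> simp [expI, expJ, qi, qj, qk]
  constructor
  · intro t ht
    set θ' := a₂ t / Real.cos (2 * A₁ t) with hθ'def
    have hA := hAd t ht
    have hθ := hθd t ht
    have hw : HasDerivAt (fun s => Real.cos (A₁ s) * Real.cos (θ₂ s))
        (-Real.sin (A₁ t) * a₁ t * Real.cos (θ₂ t)
          + Real.cos (A₁ t) * (-Real.sin (θ₂ t) * θ')) t := hA.cos.mul hθ.cos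
    have hx : HasDerivAt (fun s => Real.sin (A₁ s) * Real.cos (θ₂ s))
        (Real.cos (A₁ t) * a₁ t * Real.cos (θ₂ t)
          + Real.sin (A₁ t) * (-Real.sin (θ₂ t) * θ')) t := hA.sin.mul hθ.cos
    have hy : HasDerivAt (fun s => Real.cos (A₁ s) * Real.sin (θ₂ s))
        (-Real.sin (A₁ t) * a₁ t * Real.sin (θ₂ t)
          + Real.cos (A₁ t) * (Real.cos (θ₂ t) * θ')) t := hA.cos.mul hθ.sin
    have hz : HasDerivAt (fun s => Real.sin (A₁ s) * Real.sin (θ₂ s))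
        (Real.cos (A₁ t) * a₁ t * Real.sin (θ₂ t)
          + Real.sin (A₁ t) * (Real.cos (θ₂ t) * θ')) t := hA.sin.mul hθ.sin
    have hd := (((hw.smul_const (1:Quaternion ℝ)).add (hx.smul_const qi)).add
      (hy.smul_const qj)).add (hz.smul_const qk)
    rw [hq]
    refine hd.congr_deriv (Eq.symm ?_)
    -- algebraic identity
    have hcost := hcos t ht
    have key1 : Real.cos (2 * A₁ t) * Real.cos (A₁ t)
        + Real.sin (2 * A₁ t) * Real.sin (A₁ t) = Real.cos (A₁ t) := by
      rw [← Real.cos_sub]; ring_nf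
    have key2 : Real.sin (2 * A₁ t) * Real.cos (A₁ t)
        - Real.cos (2 * A₁ t) * Real.sin (A₁ t) = Real.sin (A₁ t) := by
      rw [← Real.sin_sub]; ring_nf
    have ha3 := ha₃ t ht
    rw [Real.tan_eq_sin_div_cos] at ha3
    ext <;>
      simp only [Quaternion.re_add, Quaternion.imI_add,
        Quaternion.imJ_add, Quaternion.imK_add, Quaternion.re_smul, Quaternion.imI_smul,
        Quaternion.imJ_smul, Quaternion.imK_smul, Quaternion.re_mul, Quaternion.imI_mul,
        Quaternion.imJ_mul, Quaternion.imK_mul, Quaternion.re_one, Quaternion.imI_one,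
        Quaternion.imJ_one, Quaternion.imK_one] <;>
      simp only [qi, qj, qk, expI, expJ, smul_eq_mul, ha3, hθ'def] <;>
      field_simp
    · linear_combination (-(a₂ t) * Real.sin (θ₂ t)) * key1
    · linear_combination (-(a₂ t) * Real.sin (θ₂ t)) * key2
    · linear_combination (a₂ t * Real.cos (θ₂ t)) * key1
    · linear_combination (a₂ t * Real.cos (θ₂ t)) * key2
  · have hA0 : A₁ t₀ = 0 := by simp [hA₁]
    have hθ0 : θ₂ t₀ = 0 := by simp [hθ₂]
    rw [hA0, hθ0]
    ext <;> simp only [Quaternion.re_one, Quaternion.imI_one, Quaternion.imJ_one,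
      Quaternion.imK_one, Quaternion.re_mul, Quaternion.imI_mul,
      Quaternion.imJ_mul, Quaternion.imK_mul] <;> simp [expI, expJ]
end
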